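/- Let Ḡ be an orientation of a finite undirected simple graph G=(V,E) containing no improving path from a peak vertex to a sink vertex, let {u,v} ∉ E with odeg(u,Ḡ) ≤ odeg(v,Ḡ), and let G̃ be the orientation of G + {u,v} obtained from Ḡ by adding the directed edge (u,v). If G̃ contains an improving path from a peak vertex of G̃ to a sink vertex of G̃, then G̃ contains such an improving path starting at u. In particular, inserting one edge creates at most one new source of improving peak-to-sink paths, namely u. -/

import Mathlib

open Finset

/-- An orientation of a simple graph `G`: a choice, for each edge `{u,v}` of `G`,
of exactly one of the directed edges `(u,v)`, `(v,u)`. -/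
structure GraphOrientation {V : Type*} (G : SimpleGraph V) where
  dir : V → V → Bool
  dir_adj : ∀ u v, dir u v = true → G.Adj u v
  exactly_one : ∀ u v, G.Adj u v → (dir u v = true ↔ ¬ dir v u = true)

/-- Out-degree of `v` w.r.t. a directed-edge relation `d`. -/
def outDegF {V : Type*} [Fintype V] (d : V → V → Bool) (v : V) : ℕ :=
  (Finset.univ.filter fun w => d v w = true).card

/-- Out-degree of a vertex in an orientation. -/
def GraphOrientation.outDeg {V : Type*} [Fintype V] {G : SimpleGraph V}
    (o : GraphOrientation G) (v : V) : ℕ := outDegF o.dir v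

/-- Maximum out-degree `Δ` of an orientation. -/
def GraphOrientation.maxOutDeg {V : Type*} [Fintype V] {G : SimpleGraph V}
    (o : GraphOrientation G) : ℕ := Finset.univ.sup o.outDeg

/-- `|E(S)|`: the number of edges of `G` with both endpoints in `S`. -/
def edgeCount {V : Type*} [Fintype V] [DecidableEq V] (G : SimpleGraph V)
    [DecidableRel G.Adj] (S : Finset V) : ℕ :=
  (G.edgeFinset.filter fun e => ∀ x ∈ e, x ∈ S).card

/-- A directed path in an orientation: a list of distinct vertices, of length at
least two (i.e. `k ≥ 1` edges), with consecutive vertices joined by directed edges. -/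
def IsDirPath {V : Type*} {G : SimpleGraph V} (o : GraphOrientation G) (p : List V) : Prop :=
  p.Nodup ∧ 2 ≤ p.length ∧ List.Chain' (fun a b => o.dir a b = true) p

/-- A directed path from `a` to `b`. -/
def IsPathFrom {V : Type*} {G : SimpleGraph V} (o : GraphOrientation G)
    (p : List V) (a b : V) : Prop :=
  IsDirPath o p ∧ p.head? = some a ∧ p.getLast? = some b

/-- Invariant 1: there is no improving path between any two vertices, i.e. no directed
path `⟨a,…,b⟩` with `odeg(a) > odeg(b) + 1`. -/
def Invariant1 {V : Type*} [Fintype V] {G : SimpleGraph V} (o : GraphOrientation G) : Prop :=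
  ∀ p a b, IsPathFrom o p a b → o.outDeg a ≤ o.outDeg b + 1

/-- Invariant 2: there is no improving path starting at a vertex of maximum out-degree. -/
def Invariant2 {V : Type*} [Fintype V] {G : SimpleGraph V} (o : GraphOrientation G) : Prop :=
  ∀ p a b, IsPathFrom o p a b → o.outDeg a = o.maxOutDeg → o.outDeg a ≤ o.outDeg b + 1

/-- Flipping the directed path `p`: every directed edge `(v_i, v_{i+1})` of `p`
is replaced by the reversed edge `(v_{i+1}, v_i)`; all other edges are unchanged. -/
def flipDir {V : Type*} [DecidableEq V] (d : V → V → Bool) (p : List V) : V → V → Bool :=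
  fun a b => if (a, b) ∈ p.zip p.tail ∨ (b, a) ∈ p.zip p.tail then d b a else d a b

/-- `G + {u,v}`: the graph obtained from `G` by inserting the edge `{u,v}`. -/
def addE {V : Type*} (G : SimpleGraph V) (u v : V) : SimpleGraph V :=
  G ⊔ SimpleGraph.fromEdgeSet {s(u, v)}

/-- `G − {u,v}`: the graph obtained from `G` by deleting the edge `{u,v}`. -/
def delE {V : Type*} (G : SimpleGraph V) (u v : V) : SimpleGraph V :=
  G.deleteEdges {s(u, v)}

lemma my_chain'_iff_zip {α : Type*} {R : α → α → Prop} :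
    ∀ (l : List α), List.Chain' R l ↔ ∀ x y, (x, y) ∈ l.zip l.tail → R x y
  | [] => by simp [List.Chain']
  | [x] => by simp [List.Chain']
  | x :: y :: l => by
    rw [show List.Chain' R (x :: y :: l) ↔ R x y ∧ List.Chain' R (y :: l) from List.isChain_cons_cons, my_chain'_iff_zip (y :: l)]
    simp only [List.tail_cons, List.zip_cons_cons, List.mem_cons, Prod.mk.injEq]
    constructor
    · rintro ⟨h1, h2⟩ a b (⟨rfl, rfl⟩ | h) <;> [exact h1; exact h2 a b h]
    · intro h
      exact ⟨h x y (Or.inl ⟨rfl, rfl⟩), fun a b hab => h a b (Or.inr hab)⟩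

lemma my_zip_split {α : Type*} {a b : α} :
    ∀ {l : List α}, (a, b) ∈ l.zip l.tail → ∃ l₁ l₂, l = l₁ ++ a :: b :: l₂
  | [], h => by simp at h
  | [x], h => by simp at h
  | x :: y :: l, h => by
    simp only [List.tail_cons, List.zip_cons_cons, List.mem_cons, Prod.mk.injEq] at h
    rcases h with ⟨rfl, rfl⟩ | h
    · exact ⟨[], l, rfl⟩
    · obtain ⟨l₁, l₂, hl⟩ := my_zip_split h
      exact ⟨x :: l₁, l₂, by rw [List.cons_append, ← hl]⟩

lemma my_fst_mem_dropLast {α : Type*} {a b : α} :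
    ∀ {l : List α}, (a, b) ∈ l.zip l.tail → a ∈ l.dropLast
  | [], h => by simp at h
  | [x], h => by simp at h
  | x :: y :: l, h => by
    simp only [List.tail_cons, List.zip_cons_cons, List.mem_cons, Prod.mk.injEq] at h
    rcases h with ⟨rfl, rfl⟩ | h
    · simp
    · have := my_fst_mem_dropLast h
      simp only [List.dropLast_cons₂, List.mem_cons]
      right
      exact this

/-- Let `Ḡ` contain no improving path from a peak vertex (out-degree
`Δ(Ḡ)`) to a sink vertex (out-degree `< Δ(Ḡ) − 1`), insert `{u,v} ∉ E` with
`odeg(u) ≤ odeg(v)` directed as `(u,v)`, obtaining `G̃`. If `G̃` contains an improving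
path from a peak vertex of `G̃` to a sink vertex of `G̃`, then it contains such a path
starting at `u`: the insertion creates at most one new source `u` of improving
peak-to-sink paths. -/
theorem insert_at_most_one_new_peak_source {V : Type*} [Fintype V] [DecidableEq V]
    {G : SimpleGraph V} (o : GraphOrientation G)
    (hps : ¬ ∃ p a b, IsPathFrom o p a b ∧ o.outDeg a = o.maxOutDeg ∧
      o.outDeg b + 1 < o.maxOutDeg)
    (u v : V) (hne : u ≠ v) (hE : ¬ G.Adj u v) (hdeg : o.outDeg u ≤ o.outDeg v)
    (ot : GraphOrientation (addE G u v))
    (hot : ∀ a b, ot.dir a b = true ↔ (o.dir a b = true ∨ (a = u ∧ b = v)))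
    (hex : ∃ p a b, IsPathFrom ot p a b ∧ ot.outDeg a = ot.maxOutDeg ∧
      ot.outDeg b + 1 < ot.maxOutDeg) :
    ∃ p b, IsPathFrom ot p u b ∧ ot.outDeg u = ot.maxOutDeg ∧
      ot.outDeg b + 1 < ot.maxOutDeg := by
  classical
  obtain ⟨p, a, b, hpath, hpeak, hsink⟩ := hex
  have hduv : ¬ o.dir u v = true := fun h => hE (o.dir_adj u v h)
  have hdegu : ot.outDeg u = o.outDeg u + 1 := by
    show outDegF ot.dir u = outDegF o.dir u + 1
    unfold outDegF
    have hset : (Finset.univ.filter fun w => ot.dir u w = true)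
        = insert v (Finset.univ.filter fun w => o.dir u w = true) := by
      ext w
      simp only [Finset.mem_filter, Finset.mem_univ, true_and, Finset.mem_insert, hot]
      tauto
    rw [hset, Finset.card_insert_of_notMem (by simp [hduv])]
  have hdegw : ∀ w, w ≠ u → ot.outDeg w = o.outDeg w := by
    intro w hw
    show outDegF ot.dir w = outDegF o.dir w
    unfold outDegF
    congr 1
    ext x
    simp only [Finset.mem_filter, Finset.mem_univ, true_and, hot]
    tauto
  have hmono : ∀ w, o.outDeg w ≤ ot.outDeg w := by
    intro w
    by_cases hw : w = u
    · subst hw; omega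
    · rw [hdegw w hw]
  have hmax : o.maxOutDeg ≤ ot.maxOutDeg :=
    Finset.sup_le fun w _ => (hmono w).trans (Finset.le_sup (Finset.mem_univ w))
  by_cases ha : a = u
  · subst ha; exact ⟨p, b, hpath, hpeak, hsink⟩
  have hdegA : ot.outDeg a = o.outDeg a := hdegw a ha
  have hΔ : ot.maxOutDeg = o.maxOutDeg :=
    le_antisymm (by rw [← hpeak, hdegA]; exact Finset.le_sup (Finset.mem_univ a)) hmax
  obtain ⟨⟨hnodup, hlen, hchain⟩, hhead, hlast⟩ := hpath
  by_cases huv : (u, v) ∈ p.zip p.tail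
  · obtain ⟨p₁, p₂, rfl⟩ := my_zip_split huv
    have hp1 : p₁ ≠ [] := by
      rintro rfl
      simp only [List.nil_append, List.head?_cons, Option.some.injEq] at hhead
      exact ha hhead.symm
    have hdisj : List.Disjoint p₁ (u :: v :: p₂) := List.disjoint_of_nodup_append hnodup
    have hu_not : u ∉ p₁ := fun h => hdisj h (by simp)
    have hchain_pre : List.Chain' (fun x y => ot.dir x y = true) (p₁ ++ [u]) := by
      have h2 := hchain
      rw [show p₁ ++ u :: v :: p₂ = (p₁ ++ [u]) ++ v :: p₂ by simp] at h2
      exact h2.left_of_append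
    have hchain_pre' : List.Chain' (fun x y => o.dir x y = true) (p₁ ++ [u]) := by
      rw [my_chain'_iff_zip] at hchain_pre ⊢
      intro x y hxy
      have hx : x ∈ (p₁ ++ [u]).dropLast := my_fst_mem_dropLast hxy
      rw [List.dropLast_concat] at hx
      rcases (hot x y).1 (hchain_pre x y hxy) with h | ⟨rfl, rfl⟩
      · exact h
      · exact absurd hx hu_not
    have hpre : IsPathFrom o (p₁ ++ [u]) a u := by
      refine ⟨⟨?_, ?_, hchain_pre'⟩, ?_, ?_⟩
      · refine List.Nodup.append (hnodup.of_append_left) (List.nodup_singleton u) ?_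
        intro x hx hx'
        simp only [List.mem_singleton] at hx'
        subst hx'
        exact hu_not hx
      · rw [List.length_append]
        cases p₁ with
        | nil => exact absurd rfl hp1
        | cons c cs => simp
      · rw [List.head?_append_of_ne_nil _ hp1]
        rwa [List.head?_append_of_ne_nil _ hp1] at hhead
      · exact List.getLast?_concat
    have hpeakO : o.outDeg a = o.maxOutDeg := by rw [← hdegA, hpeak, hΔ]
    have hub : ¬ (o.outDeg u + 1 < o.maxOutDeg) := fun h => hps ⟨_, a, u, hpre, hpeakO, h⟩
    have h1 : ot.outDeg u ≤ ot.maxOutDeg := Finset.le_sup (Finset.mem_univ u)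
    have hupeak : ot.outDeg u = ot.maxOutDeg := by omega
    have hsuf : IsPathFrom ot (u :: v :: p₂) u b := by
      refine ⟨⟨hnodup.of_append_right, by simp, hchain.right_of_append⟩, rfl, ?_⟩
      rwa [List.getLast?_append_of_ne_nil _ (by simp)] at hlast
    exact ⟨u :: v :: p₂, b, hsuf, hupeak, hsink⟩
  · have hchainO : List.Chain' (fun x y => o.dir x y = true) p := by
      rw [my_chain'_iff_zip] at hchain ⊢
      intro x y hxy
      rcases (hot x y).1 (hchain x y hxy) with h | ⟨rfl, rfl⟩
      · exact h
      · exact absurd hxy huv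
    exfalso
    apply hps
    refine ⟨p, a, b, ⟨⟨hnodup, hlen, hchainO⟩, hhead, hlast⟩, ?_, ?_⟩
    · rw [← hdegA, hpeak, hΔ]
    · have hb := hmono b
      rw [hΔ] at hsink
      omega
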